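/- Let x : [0,∞) → ℝ be a càdlàg function of bounded variation with drift δ ∈ ℝ (i.e., x_t = x_0 + δ t + Σ_{s ∈ (0,t]} (x_s − x_{s−})), let α > 0, b ∈ ℝ, and define h^b(y) = α·1_{(b,∞)}(y) if δ ∉ [0,α], and h^b(y) = α·1_{(b,∞)}(y) + δ·1_{{b}}(y) if δ ∈ [0,α]. Then the integral equation y_t = x_t − ∫_0^t h^b(y_s) ds, t ≥ 0, has at most one solution: if y and ỹ both satisfy this equation for all t ≥ 0, then y_t = ỹ_t for all t ≥ 0. -/

import Mathlib

open MeasureTheory Filter Topology Set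

/-- A function `f : ℝ → ℝ` viewed on `[0,∞)` is càdlàg. -/
def Cadlag (f : ℝ → ℝ) : Prop :=
  (∀ t : ℝ, 0 ≤ t → ContinuousWithinAt f (Set.Ici t) t) ∧
  (∀ t : ℝ, 0 < t → ∃ l : ℝ, Filter.Tendsto f (nhdsWithin t (Set.Iio t)) (nhds l))

lemma key_aux (g : ℝ → ℝ) (α : ℝ) (hα : 0 < α)
    (hint : ∀ t : ℝ, 0 ≤ t → IntegrableOn g (Set.Ioc 0 t))
    (hbd : ∀ s : ℝ, |g s| ≤ α)
    (hsign : ∀ s : ℝ, 0 < s → 0 < (∫ u in Set.Ioc (0:ℝ) s, g u) → g s ≤ 0)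
    (t1 : ℝ) (ht1 : 0 ≤ t1) : (∫ u in Set.Ioc (0:ℝ) t1, g u) ≤ 0 := by
  by_contra hpos
  push_neg at hpos
  set F : ℝ → ℝ := fun t => ∫ u in Set.Ioc (0:ℝ) t, g u with hF
  have hF0 : F 0 = 0 := by simp [hF]
  have Fadd : ∀ s t : ℝ, 0 ≤ s → s ≤ t → F t = F s + ∫ u in Set.Ioc s t, g u := by
    intro s t hs hst
    have h1 : IntegrableOn g (Set.Ioc 0 s) := hint s hs
    have h2 : IntegrableOn g (Set.Ioc s t) :=
      (hint t (hs.trans hst)).mono_set (Set.Ioc_subset_Ioc_left hs)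
    rw [hF]
    simp only
    rw [← Set.Ioc_union_Ioc_eq_Ioc hs hst,
      setIntegral_union (Set.Ioc_disjoint_Ioc_of_le le_rfl) measurableSet_Ioc h1 h2]
  have Flip : ∀ s t : ℝ, 0 ≤ s → s ≤ t → |F t - F s| ≤ α * (t - s) := by
    intro s t hs hst
    rw [Fadd s t hs hst]
    have h2 : IntegrableOn g (Set.Ioc s t) :=
      (hint t (hs.trans hst)).mono_set (Set.Ioc_subset_Ioc_left hs)
    have hμ : volume (Set.Ioc s t) < ⊤ := by
      rw [Real.volume_Ioc]; exact ENNReal.ofReal_lt_top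
    have := norm_setIntegral_le_of_norm_le_const (μ := volume) (s := Set.Ioc s t)
      (f := g) hμ (fun x _ => by simpa using hbd x)
    simp only [Real.norm_eq_abs] at this
    rw [Real.volume_real_Ioc_of_le hst] at this
    calc |F s + (∫ u in Set.Ioc s t, g u) - F s| = |∫ u in Set.Ioc s t, g u| := by ring_nf
    _ ≤ α * (t - s) := by linarith [this]
  have Fcont : ContinuousOn F (Set.Icc 0 t1) := by
    apply LipschitzOnWith.continuousOn (K := α.toNNReal)
    apply LipschitzOnWith.of_dist_le_mul
    intro a ha c hc
    rcases le_total a c with h | h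
    · rw [Real.dist_eq, Real.dist_eq, abs_sub_comm (F a) (F c), abs_sub_comm a c,
        abs_of_nonneg (by linarith : (0:ℝ) ≤ c - a)]
      calc |F c - F a| ≤ α * (c - a) := Flip a c ha.1 h
      _ = α.toNNReal * (c - a) := by rw [Real.coe_toNNReal α hα.le]
    · rw [Real.dist_eq, Real.dist_eq, abs_of_nonneg (by linarith : (0:ℝ) ≤ a - c)]
      calc |F a - F c| ≤ α * (a - c) := Flip c a hc.1 h
      _ = α.toNNReal * (a - c) := by rw [Real.coe_toNNReal α hα.le]
  set S : Set ℝ := Set.Icc 0 t1 ∩ F ⁻¹' (Set.Iic 0) with hS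
  have hScl : IsClosed S := Fcont.preimage_isClosed_of_isClosed isClosed_Icc isClosed_Iic
  have hScomp : IsCompact S := isCompact_Icc.of_isClosed_subset hScl Set.inter_subset_left
  have hSne : S.Nonempty := ⟨0, ⟨le_refl 0, ht1⟩, by simp [hF0]⟩
  set t0 : ℝ := sSup S with ht0
  have ht0S : t0 ∈ S := hScomp.sSup_mem hSne
  obtain ⟨⟨ht00, ht0t1⟩, ht0F⟩ := ht0S
  have ht0lt : t0 < t1 := by
    rcases lt_or_eq_of_le ht0t1 with h | h
    · exact h
    · exfalso; rw [h] at ht0F; simp at ht0F; linarith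
  have hposOn : ∀ s ∈ Set.Ioc t0 t1, g s ≤ 0 := by
    intro s hs
    have hFs : 0 < F s := by
      by_contra hc
      push_neg at hc
      have : s ∈ S := ⟨⟨ht00.trans hs.1.le, hs.2⟩, hc⟩
      have := le_csSup hScomp.bddAbove this
      linarith [hs.1]
    exact hsign s (lt_of_le_of_lt ht00 hs.1) hFs
  have hFt1 : F t1 = F t0 + ∫ u in Set.Ioc t0 t1, g u := Fadd t0 t1 ht00 ht0t1
  have hle : (∫ u in Set.Ioc t0 t1, g u) ≤ 0 :=
    setIntegral_nonpos measurableSet_Ioc hposOn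
  simp only [Set.mem_preimage, Set.mem_Iic] at ht0F
  have : F t1 ≤ 0 := by rw [hFt1]; linarith
  exact absurd hpos (by simpa [hF] using this.not_gt)

theorem stmt5 (x : ℝ → ℝ) (hx : Cadlag x)
    (hbv : ∀ t : ℝ, 0 ≤ t → BoundedVariationOn x (Set.Icc 0 t))
    (δ : ℝ)
    (hdecomp : ∀ t : ℝ, 0 ≤ t →
      x t = x 0 + δ * t + ∑' s : Set.Ioc (0:ℝ) t, (x s - Function.leftLim x s))
    (α : ℝ) (hα : 0 < α) (b : ℝ)
    (hb : ℝ → ℝ)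
    (hhb : hb = fun y =>
      Set.indicator (Set.Ioi b) (fun _ => α) y +
        (if δ ∈ Set.Icc 0 α then Set.indicator ({b} : Set ℝ) (fun _ => δ) y else 0))
    (y ytil : ℝ → ℝ)
    (hyint : ∀ t : ℝ, 0 ≤ t →
      MeasureTheory.IntegrableOn (fun s => hb (y s)) (Set.Ioc 0 t))
    (hytint : ∀ t : ℝ, 0 ≤ t →
      MeasureTheory.IntegrableOn (fun s => hb (ytil s)) (Set.Ioc 0 t))
    (hy : ∀ t : ℝ, 0 ≤ t → y t = x t - ∫ s in Set.Ioc (0:ℝ) t, hb (y s))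
    (hyt : ∀ t : ℝ, 0 ≤ t → ytil t = x t - ∫ s in Set.Ioc (0:ℝ) t, hb (ytil s)) :
    ∀ t : ℝ, 0 ≤ t → y t = ytil t := by
  have hmono : ∀ a a' : ℝ, a ≤ a' → hb a ≤ hb a' := by
    intro a a' h
    subst hhb
    simp only [Set.indicator_apply, Set.mem_Ioi, Set.mem_singleton_iff]
    by_cases hδ : δ ∈ Set.Icc 0 α
    · rw [if_pos hδ, if_pos hδ]
      obtain ⟨h1, h2⟩ := hδ
      split_ifs <;>
        first
          | linarith
          | (exfalso; exact (by assumption : ¬ a' = b) (le_antisymm (by linarith) (by linarith)))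
    · rw [if_neg hδ, if_neg hδ]
      split_ifs <;> linarith
  have hrange : ∀ a : ℝ, 0 ≤ hb a ∧ hb a ≤ α := by
    intro a
    subst hhb
    simp only [Set.indicator_apply, Set.mem_Ioi, Set.mem_singleton_iff]
    by_cases hδ : δ ∈ Set.Icc 0 α
    · rw [if_pos hδ]
      obtain ⟨h1, h2⟩ := hδ
      split_ifs <;> constructor <;> linarith
    · rw [if_neg hδ]
      split_ifs <;> constructor <;> linarith
  have hdiff : ∀ t : ℝ, 0 ≤ t →
      y t - ytil t = ∫ u in Set.Ioc (0:ℝ) t, (hb (ytil u) - hb (y u)) := by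
    intro t ht
    rw [hy t ht, hyt t ht, integral_sub (hytint t ht) (hyint t ht)]
    ring
  have hdiff' : ∀ t : ℝ, 0 ≤ t →
      ytil t - y t = ∫ u in Set.Ioc (0:ℝ) t, (hb (y u) - hb (ytil u)) := by
    intro t ht
    rw [hy t ht, hyt t ht, integral_sub (hyint t ht) (hytint t ht)]
    ring
  have hbd : ∀ u v : ℝ, |hb u - hb v| ≤ α := by
    intro u v
    rw [abs_le]
    constructor <;> linarith [(hrange u).1, (hrange u).2, (hrange v).1, (hrange v).2]
  have h1 : ∀ t : ℝ, 0 ≤ t → y t - ytil t ≤ 0 := by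
    intro t ht
    rw [hdiff t ht]
    apply key_aux (fun u => hb (ytil u) - hb (y u)) α hα (fun t ht => by exact (hytint t ht).sub (hyint t ht)) (fun s => hbd _ _) _ t ht
    intro s hs hpos
    rw [← hdiff s hs.le] at hpos
    have := hmono (ytil s) (y s) (by linarith)
    show hb (ytil s) - hb (y s) ≤ 0
    linarith
  have h2 : ∀ t : ℝ, 0 ≤ t → ytil t - y t ≤ 0 := by
    intro t ht
    rw [hdiff' t ht]
    apply key_aux (fun u => hb (y u) - hb (ytil u)) α hα (fun t ht => by exact (hyint t ht).sub (hytint t ht)) (fun s => hbd _ _) _ t ht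
    intro s hs hpos
    rw [← hdiff' s hs.le] at hpos
    have := hmono (y s) (ytil s) (by linarith)
    show hb (y s) - hb (ytil s) ≤ 0
    linarith
  intro t ht
  linarith [h1 t ht, h2 t ht]
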